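/- Let X be a nonempty finite type, let p_d be a pmf on X, let p_n be a pmf on X with p_n x > 0 for every x, let ν > 0, and let k ∈ ℕ. Let φ : ℝ^k → X → ℝ be such that for every x the map θ ↦ φ θ x is differentiable on ℝ^k. Define J : ℝ^k → ℝ by J(θ) = Σ_x p_d x * log (exp (φ θ x) / (exp (φ θ x) + ν * p_n x)) + ν * Σ_x p_n x * log (ν * p_n x / (exp (φ θ x) + ν * p_n x)), and define P0(θ, x) = exp (φ θ x) / (exp (φ θ x) + ν * p_n x) and P1(θ, x) = 1 − P0(θ, x). Then J is differentiable and its gradient at every θ ∈ ℝ^k is ∇J(θ) = Σ_x p_d x * P1(θ, x) * ∇_θ φ θ x − ν * Σ_x p_n x * P0(θ, x) * ∇_θ φ θ x. -/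

import Mathlib

open Real Finset

/-- Differentiability and gradient formula for the NCE objective
`J(θ) = Σ_x p_d x * log P0(θ,x) + ν Σ_x p_n x * log (ν p_n x / (exp (φ θ x) + ν p_n x))`
with `P0(θ,x) = exp (φ θ x) / (exp (φ θ x) + ν p_n x)` and `P1 = 1 - P0`:
`∇J(θ) = Σ_x p_d x * P1(θ,x) • ∇_θ φ θ x − ν • Σ_x p_n x * P0(θ,x) • ∇_θ φ θ x`. -/
theorem stmt_7 {X : Type*} [Fintype X] [Nonempty X]
    (pd pn : X → ℝ)
    (hpd0 : ∀ x, 0 ≤ pd x) (hpd1 : ∑ x, pd x = 1)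
    (hpn0 : ∀ x, 0 < pn x) (hpn1 : ∑ x, pn x = 1)
    (ν : ℝ) (hν : 0 < ν) (k : ℕ)
    (φ : EuclideanSpace ℝ (Fin k) → X → ℝ)
    (hφ : ∀ x, Differentiable ℝ (fun θ => φ θ x))
    (J : EuclideanSpace ℝ (Fin k) → ℝ)
    (hJ : ∀ θ, J θ = ∑ x, pd x * Real.log (Real.exp (φ θ x) / (Real.exp (φ θ x) + ν * pn x))
        + ν * ∑ x, pn x * Real.log (ν * pn x / (Real.exp (φ θ x) + ν * pn x)))
    (P0 P1 : EuclideanSpace ℝ (Fin k) → X → ℝ)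
    (hP0 : ∀ θ x, P0 θ x = Real.exp (φ θ x) / (Real.exp (φ θ x) + ν * pn x))
    (hP1 : ∀ θ x, P1 θ x = 1 - P0 θ x) :
    Differentiable ℝ J ∧
      ∀ θ, gradient J θ =
        (∑ x, (pd x * P1 θ x) • gradient (fun θ' => φ θ' x) θ)
          - ν • ∑ x, (pn x * P0 θ x) • gradient (fun θ' => φ θ' x) θ := by
  -- positivity of denominators
  have hD : ∀ θ x, 0 < Real.exp (φ θ x) + ν * pn x := fun θ x =>
    add_pos (Real.exp_pos _) (mul_pos hν (hpn0 x))
  -- rewrite J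
  have hJ' : ∀ θ, J θ = (∑ x, (pd x * φ θ x
      - (pd x + ν * pn x) * Real.log (Real.exp (φ θ x) + ν * pn x)))
      + ν * ∑ x, pn x * Real.log (ν * pn x) := by
    intro θ
    have h1 : ∑ x, pd x * Real.log (Real.exp (φ θ x) / (Real.exp (φ θ x) + ν * pn x))
        = ∑ x, (pd x * φ θ x - pd x * Real.log (Real.exp (φ θ x) + ν * pn x)) :=
      Finset.sum_congr rfl fun x _ => by
        rw [Real.log_div (Real.exp_pos _).ne' (hD θ x).ne', Real.log_exp]; ring
    have h2 : ∑ x, pn x * Real.log (ν * pn x / (Real.exp (φ θ x) + ν * pn x))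
        = ∑ x, (pn x * Real.log (ν * pn x) - pn x * Real.log (Real.exp (φ θ x) + ν * pn x)) :=
      Finset.sum_congr rfl fun x _ => by
        rw [Real.log_div (mul_pos hν (hpn0 x)).ne' (hD θ x).ne']; ring
    have h3 : ∑ x, (pd x * φ θ x
        - (pd x + ν * pn x) * Real.log (Real.exp (φ θ x) + ν * pn x))
        = ∑ x, pd x * φ θ x - ∑ x, pd x * Real.log (Real.exp (φ θ x) + ν * pn x)
          - ν * ∑ x, pn x * Real.log (Real.exp (φ θ x) + ν * pn x) := by
      rw [Finset.mul_sum, ← Finset.sum_sub_distrib, ← Finset.sum_sub_distrib]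
      exact Finset.sum_congr rfl fun x _ => by ring
    rw [hJ θ, h1, h2, h3, Finset.sum_sub_distrib, Finset.sum_sub_distrib]
    ring
  -- key: HasGradientAt at each θ
  have key : ∀ θ, HasGradientAt J
      ((∑ x, (pd x * P1 θ x) • gradient (fun θ' => φ θ' x) θ)
        - ν • ∑ x, (pn x * P0 θ x) • gradient (fun θ' => φ θ' x) θ) θ := by
    intro θ
    set G := fun x => gradient (fun θ' => φ θ' x) θ with hG
    have hFD : ∀ x, HasFDerivAt (fun θ' => φ θ' x)
        ((InnerProductSpace.toDual ℝ (EuclideanSpace ℝ (Fin k))) (G x)) θ :=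
      fun x => ((hφ x).differentiableAt.hasGradientAt).hasFDerivAt
    have hsum : HasFDerivAt (fun θ' => (∑ x, (pd x * φ θ' x
        - (pd x + ν * pn x) * Real.log (Real.exp (φ θ' x) + ν * pn x)))
        + ν * ∑ x, pn x * Real.log (ν * pn x))
        (∑ x, ((pd x - (pd x + ν * pn x) *
            (Real.exp (φ θ x) / (Real.exp (φ θ x) + ν * pn x))) •
          (InnerProductSpace.toDual ℝ (EuclideanSpace ℝ (Fin k))) (G x))) θ := by
      apply HasFDerivAt.add_const
      apply HasFDerivAt.fun_sum
      intro x _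
      have h1 := hFD x
      have h2 : HasFDerivAt (fun θ' => Real.exp (φ θ' x) + ν * pn x)
          (Real.exp (φ θ x) • (InnerProductSpace.toDual ℝ _) (G x)) θ :=
        h1.exp.add_const _
      have h3 := h2.log (hD θ x).ne'
      have h4 := (h1.const_mul (pd x)).fun_sub (h3.const_mul (pd x + ν * pn x))
      convert h4 using 1
      rw [smul_smul, smul_smul, ← sub_smul]
      congr 1
      field_simp
    have := hsum.hasGradientAt
    have hJeq : J = fun θ' => (∑ x, (pd x * φ θ' x
        - (pd x + ν * pn x) * Real.log (Real.exp (φ θ' x) + ν * pn x)))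
        + ν * ∑ x, pn x * Real.log (ν * pn x) := funext hJ'
    rw [hJeq]
    convert this using 1
    rw [map_sum, Finset.smul_sum, ← Finset.sum_sub_distrib]
    refine Finset.sum_congr rfl fun x _ => ?_
    rw [map_smul, LinearIsometryEquiv.symm_apply_apply, hG]
    rw [smul_smul, ← sub_smul]
    congr 1
    rw [hP1 θ x, hP0 θ x]
    ring
  constructor
  · intro θ
    exact (key θ).differentiableAt
  · intro θ
    exact (key θ).gradient
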